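/- For any matrices u₁,…,u_s of the form α(e_{11}+e_{33}), any matrices v₁,…,v_t of the form β e_{22}, and w = λe_{12}, one has u₁⋯u_s · w · v₁⋯v_t = (∏αᵢ)λ(∏βⱼ)·e_{12}. Consequently, the multilinear monomials y_{i₁}⋯y_{i_s} z y_{j₁}⋯y_{j_t} (with i₁<⋯<i_s, j₁<⋯<j_t, s+t = m) are linearly independent modulo the ℤ₂-graded identities of A¹. -/

import Mathlib

private def DD {K : Type*} [Field K] (x y : K) : Matrix (Fin 3) (Fin 3) K :=
  !![x,0,0;0,y,0;0,0,x]

private lemma DD_mul {K : Type*} [Field K] (x y x' y' : K) :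
    DD x y * DD x' y' = DD (x*x') (y*y') := by
  simp [DD, Matrix.mul_fin_three]

private lemma DD_one {K : Type*} [Field K] : DD (1:K) 1 = 1 := by
  simp [DD, Matrix.one_fin_three]

private lemma list_prod_DD {K : Type*} [Field K] {ι : Type*} (d g : ι → K) (l : List ι) :
    (l.map fun i => DD (d i) (g i)).prod = DD ((l.map d).prod) ((l.map g).prod) := by
  induction l with
  | nil => simp [DD_one]
  | cons p l ih => simp [ih, DD_mul]

private lemma smul_E {K : Type*} [Field K] (α : K) :
    α • !![(1:K),0,0;0,0,0;0,0,1] = DD α 0 := by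
  simp [DD, Matrix.smul_of, Matrix.smul_cons, Matrix.smul_empty]

private lemma smul_F {K : Type*} [Field K] (β : K) :
    β • !![(0:K),0,0;0,1,0;0,0,0] = DD 0 β := by
  simp [DD, Matrix.smul_of, Matrix.smul_cons, Matrix.smul_empty]

private lemma sandwich {K : Type*} [Field K] (a b a' b' lam : K) :
    DD a b * (lam • !![(0:K),1,0;0,0,0;0,0,0]) * DD a' b'
      = (a * lam * b') • !![(0:K),1,0;0,0,0;0,0,0] := by
  simp only [DD, Matrix.smul_of, Matrix.smul_cons, Matrix.smul_empty, Matrix.mul_fin_three,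
    smul_eq_mul, mul_zero, mul_one, zero_mul, add_zero, zero_add, one_mul]

private lemma sort_prod {K : Type*} [Field K] {m : ℕ} (S : Finset (Fin m)) (d : Fin m → K) :
    ((S.sort (· ≤ ·)).map d).prod = S.prod d := by
  rw [← Finset.prod_map_toList]
  exact List.Perm.prod_eq ((Finset.sort_perm_toList S _).map d)

private lemma W_ne_zero {K : Type*} [Field K] :
    (!![(0:K),1,0;0,0,0;0,0,0]) ≠ 0 := by
  intro h
  simpa using congrFun (congrFun h 0) 1

/-- First part: `u₁⋯u_s · (λe₁₂) · v₁⋯v_t = (∏αᵢ)λ(∏βⱼ)·e₁₂` where each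
`uᵢ = αᵢ(e₁₁+e₃₃)` and each `vⱼ = βⱼe₂₂`.  Second part: the multilinear
monomials `y_{i₁}⋯y_{i_s} z y_{j₁}⋯y_{j_t}` (indices increasing on each side,
determined by the set of indices placed before `z`) are linearly independent
modulo the ℤ₂-graded identities of `A¹`. -/
theorem stmt_8 (K : Type*) [Field K] [CharZero K]
    (A0 A1 : Set (Matrix (Fin 3) (Fin 3) K))
    (hA0 : A0 = {M | ∃ d g c : K, M = !![d, 0, c; 0, g, 0; 0, 0, d]})
    (hA1 : A1 = {M | ∃ a b : K, M = !![0, a, 0; 0, 0, b; 0, 0, 0]}) :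
    (∀ (l₁ l₂ : List K) (lam : K),
      (l₁.map fun α => α • !![(1:K),0,0;0,0,0;0,0,1]).prod
          * (lam • !![(0:K),1,0;0,0,0;0,0,0])
          * (l₂.map fun β => β • !![(0:K),0,0;0,1,0;0,0,0]).prod
        = (l₁.prod * lam * l₂.prod) • !![(0:K),1,0;0,0,0;0,0,0]) ∧
    (∀ (m : ℕ) (coeff : Finset (Fin m) → K),
      (∀ Y : Fin m → Matrix (Fin 3) (Fin 3) K, (∀ i, Y i ∈ A0) →
        ∀ Z ∈ A1,
          ∑ S : Finset (Fin m), coeff S •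
            (((S.sort (· ≤ ·)).map Y).prod * Z * ((Sᶜ.sort (· ≤ ·)).map Y).prod) = 0) →
      ∀ S : Finset (Fin m), coeff S = 0) := by
  constructor
  · intro l₁ l₂ lam
    have h1 : (l₁.map fun α => α • !![(1:K),0,0;0,0,0;0,0,1]).prod
        = DD l₁.prod ((l₁.map fun _ => (0:K)).prod) := by
      simp only [smul_E]
      simpa using list_prod_DD (id : K → K) (fun _ => (0:K)) l₁
    have h2 : (l₂.map fun β => β • !![(0:K),0,0;0,1,0;0,0,0]).prod
        = DD ((l₂.map fun _ => (0:K)).prod) l₂.prod := by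
      simp only [smul_F]
      simpa using list_prod_DD (fun _ => (0:K)) (id : K → K) l₂
    rw [h1, h2, sandwich]
  · intro m coeff hid S₀
    classical
    set d : Fin m → K := fun i => if i ∈ S₀ then 1 else 0 with hd
    set g : Fin m → K := fun i => if i ∈ S₀ then 0 else 1 with hg
    set W : Matrix (Fin 3) (Fin 3) K := !![(0:K),1,0;0,0,0;0,0,0] with hW
    have hmem : ∀ i, DD (d i) (g i) ∈ A0 := by
      intro i; rw [hA0]; exact ⟨d i, g i, 0, rfl⟩
    have hZ : W ∈ A1 := by rw [hA1]; exact ⟨1, 0, rfl⟩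
    have key := hid (fun i => DD (d i) (g i)) hmem W hZ
    have hterm : ∀ S : Finset (Fin m),
        coeff S • (((S.sort (· ≤ ·)).map fun i => DD (d i) (g i)).prod * W
            * ((Sᶜ.sort (· ≤ ·)).map fun i => DD (d i) (g i)).prod)
          = (coeff S * (S.prod d * Sᶜ.prod g)) • W := by
      intro S
      rw [list_prod_DD, list_prod_DD, sort_prod, sort_prod, sort_prod, sort_prod]
      have : DD (S.prod d) ((List.map g (S.sort fun x1 x2 => x1 ≤ x2)).prod) * W
          * DD ((List.map d (Sᶜ.sort fun x1 x2 => x1 ≤ x2)).prod) (Sᶜ.prod g)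
          = (S.prod d * 1 * Sᶜ.prod g) • W := by
        rw [hW, ← one_smul K !![(0:K),1,0;0,0,0;0,0,0], smul_smul, mul_one,
          ← sandwich (S.prod d) ((List.map g (S.sort fun x1 x2 => x1 ≤ x2)).prod)
            ((List.map d (Sᶜ.sort fun x1 x2 => x1 ≤ x2)).prod) (Sᶜ.prod g) 1]
      rw [sort_prod, sort_prod] at this
      rw [this, smul_smul, mul_one]
    rw [Finset.sum_congr rfl (fun S _ => hterm S), ← Finset.sum_smul] at key
    have hsum : ∑ S : Finset (Fin m), coeff S * (S.prod d * Sᶜ.prod g) = 0 := by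
      rcases smul_eq_zero.mp key with h | h
      · exact h
      · exact absurd h W_ne_zero
    have heval : ∑ S : Finset (Fin m), coeff S * (S.prod d * Sᶜ.prod g) = coeff S₀ := by
      rw [Finset.sum_eq_single S₀]
      · have h1 : S₀.prod d = 1 := Finset.prod_eq_one (fun i hi => by simp [hd, hi])
        have h2 : S₀ᶜ.prod g = 1 := Finset.prod_eq_one (fun i hi => by
          simp only [Finset.mem_compl] at hi; simp [hg, hi])
        rw [h1, h2, mul_one, mul_one]
      · intro S _ hne
        by_cases hsub : S ⊆ S₀
        · obtain ⟨i, hiS₀, hiS⟩ := Finset.not_subset.mp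
            (fun h => hne (Finset.Subset.antisymm hsub h))
          have : Sᶜ.prod g = 0 :=
            Finset.prod_eq_zero (Finset.mem_compl.mpr hiS) (by simp [hg, hiS₀])
          rw [this, mul_zero, mul_zero]
        · obtain ⟨i, hiS, hiS₀⟩ := Finset.not_subset.mp hsub
          have : S.prod d = 0 := Finset.prod_eq_zero hiS (by simp [hd, hiS₀])
          rw [this, zero_mul, mul_zero]
      · intro h; exact absurd (Finset.mem_univ S₀) h
    rw [heval] at hsum
    exact hsum
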